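/- Let λ = (λ_1,...,λ_m) be a partition with λ_1 = n, and let I_λ ⊆ K[x_1,...,x_m,y_1,...,y_n] be the Ferrers ideal generated by all x_i y_j with 1 ≤ j ≤ λ_i. Then the LCM-dual of I_λ has the irredundant primary decomposition \widehat{I_λ} = ⋂_{i<j}(x_i,x_j) ∩ ⋂_{i<j}(y_i,y_j) ∩ ⋂_{x_i y_j ∉ I_λ}(x_i,y_j). -/
import Mathlib

open MvPolynomial

lemma mem_span_pair_X_iff {σ K : Type*} [Field K] (u v : σ)
    (f : MvPolynomial σ K) :
    f ∈ Ideal.span {X u, X v} ↔ ∀ d ∈ f.support, (d : σ →₀ ℕ) u ≠ 0 ∨ d v ≠ 0 := by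
  have h : ({X u, X v} : Set (MvPolynomial σ K)) = X '' {u, v} := by
    simp [Set.image_insert_eq]
  rw [h, MvPolynomial.mem_ideal_span_X_image]
  refine forall₂_congr fun d _ => ?_
  constructor
  · rintro ⟨i, hi, hne⟩
    rcases hi with rfl | hi
    · exact Or.inl hne
    · rw [Set.mem_singleton_iff] at hi; subst hi; exact Or.inr hne
  · rintro (h | h)
    · exact ⟨u, Or.inl rfl, h⟩
    · exact ⟨v, Or.inr rfl, h⟩

/-- let `λ` be a partition with `λ 0 = n` (using `0`-based indexing of rows
and columns, so the Ferrers ideal `I_λ ⊆ K[x₁,…,x_m,y₁,…,y_n]` is generated by the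
monomials `x_i y_j` with `(j : ℕ) < λ i`).  Then the LCM-dual of `I_λ`, generated by the
monomials `lcm(I_λ)/(x_i y_j)` where `lcm(I_λ) = x₁⋯x_m y₁⋯y_n`, has the irredundant
primary decomposition
`⋂_{i<j} (x_i,x_j) ∩ ⋂_{i<j} (y_i,y_j) ∩ ⋂_{x_i y_j ∉ I_λ} (x_i,y_j)`. -/
theorem ferrers_dual_primary_decomposition {m n : ℕ} {K : Type*} [Field K]
    (hm : 0 < m) (hn : 0 < n)
    (lam : Fin m → ℕ)
    (hanti : ∀ i j : Fin m, i ≤ j → lam j ≤ lam i)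
    (hfirst : lam ⟨0, hm⟩ = n)
    (hpos : ∀ i, 1 ≤ lam i)
    (A : (Fin m ⊕ Fin n) →₀ ℕ)
    (hA : A = ∑ v : Fin m ⊕ Fin n, Finsupp.single v 1)
    (C : Set (Ideal (MvPolynomial (Fin m ⊕ Fin n) K)))
    (hC : C = {P | (∃ i j : Fin m, i < j ∧
          P = Ideal.span {X (Sum.inl i), X (Sum.inl j)}) ∨
        (∃ i j : Fin n, i < j ∧
          P = Ideal.span {X (Sum.inr i), X (Sum.inr j)}) ∨
        (∃ (i : Fin m) (j : Fin n), ¬ ((j : ℕ) < lam i) ∧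
          P = Ideal.span {X (Sum.inl i), X (Sum.inr j)})}) :
    Ideal.span ((fun p : Fin m × Fin n =>
        monomial (A - Finsupp.single (Sum.inl p.1) 1 - Finsupp.single (Sum.inr p.2) 1)
          (1 : K)) '' {p | (p.2 : ℕ) < lam p.1})
      = sInf C ∧
    ∀ P ∈ C, sInf (C \ {P}) ≠ sInf C := by
  have hAv : ∀ v : Fin m ⊕ Fin n, A v = 1 := by
    intro v
    rw [hA, Finsupp.finset_sum_apply]
    simp [Finsupp.single_apply]
  classical
  have hg : ∀ u v w : Fin m ⊕ Fin n,
      (A - Finsupp.single u 1 - Finsupp.single v 1 : (Fin m ⊕ Fin n) →₀ ℕ) w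
        = if w = u ∨ w = v then 0 else 1 := by
    intro u v w
    rw [Finsupp.tsub_apply, Finsupp.tsub_apply, hAv, Finsupp.single_apply,
      Finsupp.single_apply]
    by_cases h1 : w = u
    · subst h1; simp
    · by_cases h2 : w = v
      · subst h2
        rw [if_neg (fun h : u = w => h1 h.symm), if_pos rfl, if_pos (Or.inr rfl)]; omega
      · rw [if_neg (fun h : u = w => h1 h.symm), if_neg (fun h : v = w => h2 h.symm),
          if_neg (by simp [h1, h2])]
        omega
  have hdom : ∀ (u v : Fin m ⊕ Fin n) (d : (Fin m ⊕ Fin n) →₀ ℕ),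
      (A - Finsupp.single u 1 - Finsupp.single v 1) ≤ d →
      ∀ w, w ≠ u → w ≠ v → d w ≠ 0 := by
    intro u v d hle w hw1 hw2
    have h := Finsupp.le_def.mp hle w
    rw [hg] at h
    simp only [hw1, hw2, or_self, if_false] at h
    omega
  have hdom' : ∀ (u v : Fin m ⊕ Fin n) (d : (Fin m ⊕ Fin n) →₀ ℕ),
      (∀ w, w ≠ u → w ≠ v → d w ≠ 0) →
      (A - Finsupp.single u 1 - Finsupp.single v 1) ≤ d := by
    intro u v d h
    rw [Finsupp.le_def]
    intro w
    rw [hg]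
    split_ifs with hw
    · exact Nat.zero_le _
    · push_neg at hw
      have := h w hw.1 hw.2
      omega
  constructor
  · -- the primary decomposition
    ext f
    have himg : ((fun p : Fin m × Fin n =>
        monomial (A - Finsupp.single (Sum.inl p.1) 1 - Finsupp.single (Sum.inr p.2) 1)
          (1 : K)) '' {p | (p.2 : ℕ) < lam p.1})
      = (fun s => monomial s (1 : K)) ''
        ((fun p : Fin m × Fin n =>
          A - Finsupp.single (Sum.inl p.1) 1 - Finsupp.single (Sum.inr p.2) 1) ''
          {p : Fin m × Fin n | (p.2 : ℕ) < lam p.1}) := by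
      rw [Set.image_image]
    rw [himg, mem_ideal_span_monomial_image, Submodule.mem_sInf]
    constructor
    · intro h P hP
      rw [hC] at hP
      rcases hP with ⟨i, j, hij, rfl⟩ | ⟨i, j, hij, rfl⟩ | ⟨i, j, hij, rfl⟩
      · rw [mem_span_pair_X_iff]
        intro d hd
        obtain ⟨s, ⟨p, hp, rfl⟩, hle⟩ := h d hd
        obtain ⟨a, b⟩ := p
        have hdd := hdom _ _ d hle
        by_cases hia : i = a
        · refine Or.inr (hdd _ ?_ (by simp))
          simp only [ne_eq, Sum.inl.injEq]
          intro hja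
          exact ne_of_lt hij (hia.trans hja.symm)
        · exact Or.inl (hdd _ (by simpa using hia) (by simp))
      · rw [mem_span_pair_X_iff]
        intro d hd
        obtain ⟨s, ⟨p, hp, rfl⟩, hle⟩ := h d hd
        obtain ⟨a, b⟩ := p
        have hdd := hdom _ _ d hle
        by_cases hib : i = b
        · refine Or.inr (hdd _ (by simp) ?_)
          simp only [ne_eq, Sum.inr.injEq]
          intro hjb
          exact ne_of_lt hij (hib.trans hjb.symm)
        · exact Or.inl (hdd _ (by simp) (by simpa using hib))
      · rw [mem_span_pair_X_iff]
        intro d hd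
        obtain ⟨s, ⟨p, hp, rfl⟩, hle⟩ := h d hd
        obtain ⟨a, b⟩ := p
        have hdd := hdom _ _ d hle
        by_cases hia : i = a
        · refine Or.inr (hdd _ (by simp) ?_)
          simp only [ne_eq, Sum.inr.injEq]
          intro hjb
          apply hij
          rw [hia, hjb]
          exact hp
        · exact Or.inl (hdd _ (by simpa using hia) (by simp))
    · intro h d hd
      have hx : ∀ i j : Fin m, i < j → d (Sum.inl i) ≠ 0 ∨ d (Sum.inl j) ≠ 0 := by
        intro i j hij
        have := h _ (by rw [hC]; exact Or.inl ⟨i, j, hij, rfl⟩)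
        rw [mem_span_pair_X_iff] at this
        exact this d hd
      have hy : ∀ i j : Fin n, i < j → d (Sum.inr i) ≠ 0 ∨ d (Sum.inr j) ≠ 0 := by
        intro i j hij
        have := h _ (by rw [hC]; exact Or.inr (Or.inl ⟨i, j, hij, rfl⟩))
        rw [mem_span_pair_X_iff] at this
        exact this d hd
      have hxy : ∀ (i : Fin m) (j : Fin n), ¬ ((j : ℕ) < lam i) →
          d (Sum.inl i) ≠ 0 ∨ d (Sum.inr j) ≠ 0 := by
        intro i j hij
        have := h _ (by rw [hC]; exact Or.inr (Or.inr ⟨i, j, hij, rfl⟩))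
        rw [mem_span_pair_X_iff] at this
        exact this d hd
      have hxu : ∀ a b : Fin m, d (Sum.inl a) = 0 → d (Sum.inl b) = 0 → a = b := by
        intro a b h1 h2
        by_contra hne
        rcases lt_or_gt_of_ne hne with hl | hl
        · rcases hx a b hl with t | t <;> contradiction
        · rcases hx b a hl with t | t <;> contradiction
      have hyu : ∀ a b : Fin n, d (Sum.inr a) = 0 → d (Sum.inr b) = 0 → a = b := by
        intro a b h1 h2
        by_contra hne
        rcases lt_or_gt_of_ne hne with hl | hl
        · rcases hy a b hl with t | t <;> contradiction
        · rcases hy b a hl with t | t <;> contradiction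
      by_cases hex : ∃ a : Fin m, d (Sum.inl a) = 0 <;>
        by_cases hey : ∃ b : Fin n, d (Sum.inr b) = 0
      · obtain ⟨a, ha⟩ := hex
        obtain ⟨b, hb⟩ := hey
        have hab : (b : ℕ) < lam a := by
          by_contra hc
          rcases hxy a b hc with t | t <;> contradiction
        refine ⟨_, ⟨(a, b), hab, rfl⟩, hdom' _ _ d ?_⟩
        rintro (c | c) h1 h2
        · intro hc; exact h1 (congrArg Sum.inl (hxu c a hc ha))
        · intro hc; exact h2 (congrArg Sum.inr (hyu c b hc hb))
      · push_neg at hey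
        obtain ⟨a, ha⟩ := hex
        refine ⟨_, ⟨(a, (⟨0, hn⟩ : Fin n)), hpos a, rfl⟩, hdom' _ _ d ?_⟩
        rintro (c | c) h1 h2
        · intro hc; exact h1 (congrArg Sum.inl (hxu c a hc ha))
        · exact hey c
      · push_neg at hex
        obtain ⟨b, hb⟩ := hey
        have hab : (b : ℕ) < lam ⟨0, hm⟩ := by rw [hfirst]; exact b.isLt
        refine ⟨_, ⟨((⟨0, hm⟩ : Fin m), b), hab, rfl⟩, hdom' _ _ d ?_⟩
        rintro (c | c) h1 h2
        · exact hex c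
        · intro hc; exact h2 (congrArg Sum.inr (hyu c b hc hb))
      · push_neg at hex
        push_neg at hey
        refine ⟨_, ⟨((⟨0, hm⟩ : Fin m), (⟨0, hn⟩ : Fin n)), hpos _, rfl⟩, hdom' _ _ d ?_⟩
        rintro (c | c) h1 h2
        · exact hex c
        · exact hey c
  · -- irredundancy
    intro P hP heq
    have hpair : ∀ Q ∈ C, ∃ u v : Fin m ⊕ Fin n, u ≠ v ∧ Q = Ideal.span {X u, X v} := by
      intro Q hQ
      rw [hC] at hQ
      rcases hQ with ⟨i, j, hij, rfl⟩ | ⟨i, j, hij, rfl⟩ | ⟨i, j, hij, rfl⟩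
      · exact ⟨_, _, fun h => absurd (Sum.inl_injective h) (ne_of_lt hij), rfl⟩
      · exact ⟨_, _, fun h => absurd (Sum.inr_injective h) (ne_of_lt hij), rfl⟩
      · exact ⟨_, _, by simp, rfl⟩
    obtain ⟨u, v, huv, rfl⟩ := hpair P hP
    have hsupmem : (A - Finsupp.single u 1 - Finsupp.single v 1) ∈
        (monomial (A - Finsupp.single u 1 - Finsupp.single v 1) (1 : K)).support := by
      rw [MvPolynomial.support_monomial, if_neg (one_ne_zero)]
      exact Finset.mem_singleton_self _
    have hmono : monomial (A - Finsupp.single u 1 - Finsupp.single v 1) (1 : K) ∈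
        sInf (C \ {Ideal.span {X u, X v}}) := by
      rw [Submodule.mem_sInf]
      rintro Q ⟨hQC, hQP⟩
      obtain ⟨a, b, hab, hQ⟩ := hpair Q hQC
      rw [hQ, mem_span_pair_X_iff]
      intro d hd
      rw [MvPolynomial.support_monomial, if_neg (one_ne_zero), Finset.mem_singleton] at hd
      subst hd
      by_contra hcon
      push_neg at hcon
      obtain ⟨ha, hb⟩ := hcon
      rw [hg] at ha hb
      have ha' : a = u ∨ a = v := by by_contra hh; rw [if_neg hh] at ha; omega
      have hb' : b = u ∨ b = v := by by_contra hh; rw [if_neg hh] at hb; omega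
      apply hQP
      rcases ha' with rfl | rfl <;> rcases hb' with rfl | rfl
      · exact absurd rfl hab
      · rw [Set.mem_singleton_iff, hQ]
      · rw [Set.mem_singleton_iff, hQ, Set.pair_comm]
      · exact absurd rfl hab
    have hnot : monomial (A - Finsupp.single u 1 - Finsupp.single v 1) (1 : K) ∉
        Ideal.span {X (σ := Fin m ⊕ Fin n) (R := K) u, X v} := by
      rw [mem_span_pair_X_iff]
      intro hmem
      rcases hmem _ hsupmem with t | t <;> simp [hg] at t
    rw [heq] at hmono
    exact hnot (sInf_le hP hmono)
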